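/- Let (U, I) be a standard implicational base with closure operator cl, let c ∈ U, let U_c = {x ∈ U : c ∉ cl({x})}, and define I_c = {A → b ∈ I : A ∪ {b} ⊆ U_c} ∪ {A → b : A → d ∈ I, A ⊆ U_c, d ∉ U_c, b ∈ U_c \ cl^b(A)}, with closure operator cl_c on U_c. Then for every S ⊆ U_c: cl_c(S) = U_c if and only if c ∈ cl(S). (Assume U_c is not cl-closed.) -/
import Mathlib


/-- `F` is closed for the implicational base `I`. -/
def ImpClosed {U : Type*} (I : Set (Set U × U)) (F : Set U) : Prop :=
  ∀ p ∈ I, p.1 ⊆ F → p.2 ∈ F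

/-- The closure operator induced by an implicational base `I`. -/
def clI {U : Type*} (I : Set (Set U × U)) (A : Set U) : Set U :=
  ⋂₀ {F | ImpClosed I F ∧ A ⊆ F}

/-- `cl^b(A) = ⋃_{a ∈ A} cl({a})`. -/
def clb {U : Type*} (cl : Set U → Set U) (A : Set U) : Set U := ⋃ a ∈ A, cl {a}

section Aux

variable {U : Type*}

/-- Derivability from `A` via the implications in `I`. -/
inductive Deriv (I : Set (Set U × U)) (A : Set U) : U → Prop
  | base {a : U} : a ∈ A → Deriv I A a
  | step {B : Set U} {e : U} : (B, e) ∈ I → (∀ b ∈ B, Deriv I A b) → Deriv I A e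

lemma subset_clI (I : Set (Set U × U)) (A : Set U) : A ⊆ clI I A :=
  fun _ ha _ hF => hF.2 ha

lemma clI_subset {I : Set (Set U × U)} {A F : Set U} (h1 : ImpClosed I F) (h2 : A ⊆ F) :
    clI I A ⊆ F := fun x hx => hx F ⟨h1, h2⟩

lemma impClosed_clI (I : Set (Set U × U)) (A : Set U) : ImpClosed I (clI I A) := by
  intro p hp hsub F hF
  exact hF.1 p hp (fun b hb => hsub hb F hF)

lemma deriv_iff_mem_clI (I : Set (Set U × U)) (A : Set U) (x : U) :
    Deriv I A x ↔ x ∈ clI I A := by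
  constructor
  · intro h
    induction h with
    | base ha => exact subset_clI I A ha
    | step hI _ ih => exact impClosed_clI I A _ hI ih
  · intro hx
    refine hx {y | Deriv I A y} ⟨?_, fun a ha => Deriv.base ha⟩
    intro p hp hsub
    exact Deriv.step (B := p.1) (e := p.2) (by simpa using hp) hsub

/-- Induction principle: to show `clI I A ⊆ X` it suffices that `A ⊆ X` and `X` absorbs
every implication whose premise is inside `clI I A`. -/
lemma clI_induction {I : Set (Set U × U)} {A X : Set U} (hA : A ⊆ X)
    (hstep : ∀ B e, (B, e) ∈ I → B ⊆ X → B ⊆ clI I A → e ∈ X) :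
    clI I A ⊆ X := by
  intro x hx
  rw [← deriv_iff_mem_clI] at hx
  induction hx with
  | base ha => exact hA ha
  | @step B e hI hd ih =>
    exact hstep B e hI (fun b hb => ih b hb)
      (fun b hb => (deriv_iff_mem_clI _ _ _).mp (hd b hb))

end Aux

/-- for a standard implicational base `(U, I)`, `c ∈ U`,
`U_c = {x : c ∉ cl({x})}` not closed, and the derived base `I_c`, one has for
every `S ⊆ U_c`: `cl_c(S) = U_c` iff `c ∈ cl(S)`. -/
theorem stmt16 {U : Type*} [Fintype U] (I : Set (Set U × U))
    (hstd : ∀ x : U, ImpClosed I (clI I {x} \ {x}))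
    (c : U)
    (Uc : Set U) (hUc : Uc = {x : U | c ∉ clI I {x}})
    (hnotclosed : clI I Uc ≠ Uc)
    (Ic : Set (Set U × U))
    (hIc : Ic =
      {p | p ∈ I ∧ p.1 ∪ {p.2} ⊆ Uc} ∪
      {p | ∃ d : U, (p.1, d) ∈ I ∧ p.1 ⊆ Uc ∧ d ∉ Uc ∧
        p.2 ∈ Uc \ clb (clI I) p.1}) :
    ∀ S : Set U, S ⊆ Uc → (clI Ic S = Uc ↔ c ∈ clI I S) := by
  intro S hS
  -- c itself is not in Uc
  have hcUc : c ∉ Uc := by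
    rw [hUc]
    simp only [Set.mem_setOf_eq, not_not]
    exact subset_clI I {c} rfl
  -- Uc is Ic-closed
  have hUcIc : ImpClosed Ic Uc := by
    intro p hp hsub
    rw [hIc] at hp
    rcases hp with ⟨_, h1⟩ | ⟨d, _, _, _, hb⟩
    · exact h1 (Set.mem_union_right _ rfl)
    · exact hb.1
  have hTsub : clI Ic S ⊆ Uc := clI_subset hUcIc hS
  -- cl{a} ⊆ Uc whenever a ∈ Uc
  have hclUc : ∀ a ∈ Uc, clI I {a} ⊆ Uc := by
    intro a ha x hx
    rw [hUc] at ha ⊢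
    intro hcx
    exact ha (clI_subset (impClosed_clI I {a})
      (Set.singleton_subset_iff.mpr hx) hcx)
  constructor
  · -- forward: clI Ic S = Uc → c ∈ clI I S
    intro hT
    by_contra hcS
    have hclosed : ImpClosed Ic (clI I S) := by
      intro p hp hsub
      rw [hIc] at hp
      rcases hp with ⟨h1, _⟩ | ⟨d, hAd, _, hd, _⟩
      · exact impClosed_clI I S p h1 hsub
      · exfalso
        have hdS : d ∈ clI I S := impClosed_clI I S (p.1, d) hAd hsub
        have hcd : c ∈ clI I {d} := by
          rw [hUc] at hd; simpa using hd
        exact hcS (clI_subset (impClosed_clI I S)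
          (Set.singleton_subset_iff.mpr hdS) hcd)
    have hUcS : Uc ⊆ clI I S := by
      rw [← hT]
      exact clI_subset hclosed (subset_clI I S)
    have h2 : ¬ clI I Uc ⊆ Uc := fun h =>
      hnotclosed (Set.Subset.antisymm h (subset_clI I Uc))
    obtain ⟨y, hy1, hy2⟩ := Set.not_subset.mp h2
    have hyS : y ∈ clI I S := clI_subset (impClosed_clI I S) hUcS hy1
    have hcy : c ∈ clI I {y} := by
      rw [hUc] at hy2; simpa using hy2
    exact hcS (clI_subset (impClosed_clI I S)
      (Set.singleton_subset_iff.mpr hyS) hcy)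
  · -- backward: c ∈ clI I S → clI Ic S = Uc
    intro hcS
    refine Set.Subset.antisymm hTsub ?_
    have hST : S ⊆ clI Ic S := subset_clI Ic S
    by_cases hex : ∃ A d, (A, d) ∈ I ∧ A ⊆ clI Ic S ∧ d ∉ Uc
    · obtain ⟨A, d, hAd, hAT, hdUc⟩ := hex
      -- Claim B: for a ∈ clI Ic S, cl{a} ⊆ clI Ic S
      have claimB : ∀ a ∈ clI Ic S, clI I {a} ⊆ clI Ic S := by
        intro a haT
        have haUc : a ∈ Uc := hTsub haT
        refine clI_induction (Set.singleton_subset_iff.mpr haT) ?_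
        intro B e hBe hBT hBcl
        have heUc : e ∈ Uc := hclUc a haUc (impClosed_clI I {a} (B, e) hBe hBcl)
        have hmem : (B, e) ∈ Ic := by
          rw [hIc]; left
          refine ⟨hBe, ?_⟩
          intro x hx
          rcases hx with hx | hx
          · exact hTsub (hBT hx)
          · rw [hx]; exact heUc
        exact impClosed_clI Ic S (B, e) hmem hBT
      intro x hxUc
      by_cases hxclb : x ∈ clb (clI I) A
      · simp only [clb, Set.mem_iUnion] at hxclb
        obtain ⟨a, haA, hxa⟩ := hxclb
        exact claimB a (hAT haA) hxa
      · have hmem : (A, x) ∈ Ic := by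
          rw [hIc]; right
          exact ⟨d, hAd, fun y hy => hTsub (hAT hy), hdUc, hxUc, hxclb⟩
        exact impClosed_clI Ic S (A, x) hmem hAT
    · -- otherwise clI Ic S is I-closed, contradicting c ∈ clI I S, c ∉ Uc
      exfalso
      push_neg at hex
      have hTclosed : ImpClosed I (clI Ic S) := by
        intro p hp hsub
        have hp2Uc : p.2 ∈ Uc := hex p.1 p.2 (by simpa using hp) hsub
        have hmem : p ∈ Ic := by
          rw [hIc]; left
          refine ⟨hp, ?_⟩
          intro x hx
          rcases hx with hx | hx
          · exact hTsub (hsub hx)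
          · rw [hx]; exact hp2Uc
        exact impClosed_clI Ic S p hmem hsub
      have hsub2 : clI I S ⊆ clI Ic S := clI_subset hTclosed hST
      exact hcUc (hTsub (hsub2 hcS))
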